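/- Let d > 1, let z₀, m₀ > 0, and let Z be real with 1 < Z < d^{1/(d−1)}. Set z₁ = Z·z₀ and m₁ = f(Z)·m₀ where f(Z) = √( (Z^{d−1} − 1/d) / (Z^{d+1} − Z^{2d}/d) ), and define p_i = m_i²·z_i^{1+d}/(d+1) and τ_i = z_i^{1−d}/(d−1). Let u₀, u₁, ξ be reals satisfying (u₁ − u₀)² = (p₁ − p₀)·(τ₀ − τ₁) and ξ²·(τ₀ − τ₁) = (p₁ − p₀). Then (u₁ − u₀)² = m₀²·z₀²·g(Z)² and ξ² = m₀²·z₀^{2d}·h(Z)², where g(Z) = (1/√(d²−1))·√( (f(Z)²·Z^{1+d} − 1)·(1 − Z^{1−d}) ) and h(Z) = √((d−1)/(d+1))·√( (f(Z)²·Z^{1+d} − 1)/(1 − Z^{1−d}) ). -/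

import Mathlib

/-- Parametrization of the shock curves: the jumps of velocity and the shock speed
are given by `[u]² = m₀²·z₀²·g(Z)²` and `ξ² = m₀²·z₀^(2d)·h(Z)²`. -/
theorem shock_curve_parametrization (d z₀ m₀ Z : ℝ) (hd : 1 < d)
    (hz₀ : 0 < z₀) (hm₀ : 0 < m₀) (hZ₁ : 1 < Z) (hZ₂ : Z < d ^ (1 / (d - 1)))
    (fZ gZ hZ z₁ m₁ p₀ p₁ τ₀ τ₁ u₀ u₁ ξ : ℝ)
    (hf : fZ = Real.sqrt ((Z ^ (d - 1) - 1 / d) / (Z ^ (d + 1) - Z ^ (2 * d) / d)))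
    (hz₁ : z₁ = Z * z₀) (hm₁ : m₁ = fZ * m₀)
    (hp₀ : p₀ = m₀ ^ 2 * z₀ ^ (1 + d) / (d + 1)) (hp₁ : p₁ = m₁ ^ 2 * z₁ ^ (1 + d) / (d + 1))
    (hτ₀ : τ₀ = z₀ ^ (1 - d) / (d - 1)) (hτ₁ : τ₁ = z₁ ^ (1 - d) / (d - 1))
    (hu : (u₁ - u₀) ^ 2 = (p₁ - p₀) * (τ₀ - τ₁))
    (hξ : ξ ^ 2 * (τ₀ - τ₁) = p₁ - p₀)
    (hg : gZ = (1 / Real.sqrt (d ^ 2 - 1)) *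
      Real.sqrt ((fZ ^ 2 * Z ^ (1 + d) - 1) * (1 - Z ^ (1 - d))))
    (hh : hZ = Real.sqrt ((d - 1) / (d + 1)) *
      Real.sqrt ((fZ ^ 2 * Z ^ (1 + d) - 1) / (1 - Z ^ (1 - d)))) :
    (u₁ - u₀) ^ 2 = m₀ ^ 2 * z₀ ^ 2 * gZ ^ 2
      ∧ ξ ^ 2 = m₀ ^ 2 * z₀ ^ (2 * d) * hZ ^ 2 := by
  have hd0 : (0:ℝ) < d := lt_trans one_pos hd
  have hZ0 : (0:ℝ) < Z := lt_trans one_pos hZ₁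
  have hd1 : (0:ℝ) < d - 1 := by linarith
  have hd1' : (0:ℝ) < d + 1 := by linarith
  -- rewrite all real powers of Z and z₀ in terms of t := Z^d, s := z₀^d
  have e1 : Z ^ (d - 1) = Z ^ d / Z := by
    rw [Real.rpow_sub hZ0, Real.rpow_one]
  have e2 : Z ^ (d + 1) = Z ^ d * Z := by
    rw [Real.rpow_add hZ0, Real.rpow_one]
  have e2' : Z ^ (1 + d) = Z ^ d * Z := by rw [add_comm]; exact e2
  have e3 : Z ^ (2 * d) = Z ^ d * Z ^ d := by
    rw [two_mul, Real.rpow_add hZ0]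
  have e4 : Z ^ (1 - d) = Z / Z ^ d := by
    rw [Real.rpow_sub hZ0, Real.rpow_one]
  have f2 : z₀ ^ (1 + d) = z₀ * z₀ ^ d := by
    rw [Real.rpow_add hz₀, Real.rpow_one]
  have f4 : z₀ ^ (1 - d) = z₀ / z₀ ^ d := by
    rw [Real.rpow_sub hz₀, Real.rpow_one]
  have f3 : z₀ ^ (2 * d) = z₀ ^ d * z₀ ^ d := by
    rw [two_mul, Real.rpow_add hz₀]
  set t := Z ^ d with htdef
  set s := z₀ ^ d with hsdef
  have ht0 : 0 < t := Real.rpow_pos_of_pos hZ0 d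
  have hs0 : 0 < s := Real.rpow_pos_of_pos hz₀ d
  -- t > Z
  have htZ : Z < t := by
    have : Z ^ (1:ℝ) < Z ^ d := Real.rpow_lt_rpow_of_exponent_lt hZ₁ hd
    simpa [Real.rpow_one] using this
  -- t < d * Z  (from Z < d^(1/(d-1)))
  have htd : t < d * Z := by
    have h1 : Z ^ (d - 1) < (d ^ (1 / (d - 1))) ^ (d - 1) :=
      Real.rpow_lt_rpow (le_of_lt hZ0) hZ₂ hd1
    have h2 : (d ^ (1 / (d - 1)) : ℝ) ^ (d - 1) = d := by
      rw [← Real.rpow_mul (le_of_lt hd0), one_div_mul_cancel (ne_of_gt hd1), Real.rpow_one]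
    rw [e1, h2] at h1
    rw [div_lt_iff₀ hZ0] at h1
    linarith
  -- positivity of numerator and denominator inside f
  have hnum : 0 < t / Z - 1 / d := by
    have h1 : (1:ℝ) < t / Z := (one_lt_div hZ0).mpr htZ
    have h2 : 1 / d < 1 := by rw [div_lt_one hd0]; exact hd
    linarith
  have hden : 0 < t * Z - t * t / d := by
    rw [sub_pos, div_lt_iff₀ hd0]
    calc t * t < t * (d * Z) := by
          exact mul_lt_mul_of_pos_left htd ht0
      _ = t * Z * d := by ring
  have hfsq : fZ ^ 2 = (t / Z - 1 / d) / (t * Z - t * t / d) := by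
    rw [hf, e1, e2, e3, Real.sq_sqrt (le_of_lt (div_pos hnum hden))]
  -- positivity of A := fZ² Z^(1+d) − 1 and B := 1 − Z^(1−d)
  have hA : 0 < fZ ^ 2 * Z ^ (1 + d) - 1 := by
    rw [hfsq, e2']
    rw [sub_pos, div_mul_eq_mul_div, one_lt_div hden]
    have key : (t / Z - 1 / d) * (t * Z) = t * t - t * Z / d := by
      field_simp
    rw [key]
    have h1 : 0 < t - Z := by linarith
    have h2 : (t * t - t * Z / d) - (t * Z - t * t / d) = (d + 1) * (t * (t - Z)) / d := by
      field_simp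
      ring
    have h3 : 0 < (d + 1) * (t * (t - Z)) / d :=
      div_pos (mul_pos hd1' (mul_pos ht0 h1)) hd0
    linarith
  have hB : 0 < 1 - Z ^ (1 - d) := by
    rw [e4, sub_pos, div_lt_one ht0]
    exact htZ
  -- squares of g and h
  have hd2 : (0:ℝ) < d ^ 2 - 1 := by
    have h : d ^ 2 - 1 = (d - 1) * (d + 1) := by ring
    rw [h]; exact mul_pos hd1 hd1'
  have hgsq : gZ ^ 2 = (fZ ^ 2 * Z ^ (1 + d) - 1) * (1 - Z ^ (1 - d)) / (d ^ 2 - 1) := by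
    rw [hg, mul_pow, div_pow, one_pow,
      Real.sq_sqrt (le_of_lt hd2),
      Real.sq_sqrt (le_of_lt (mul_pos hA hB))]
    ring
  have hhsq : hZ ^ 2 = (d - 1) / (d + 1) * ((fZ ^ 2 * Z ^ (1 + d) - 1) / (1 - Z ^ (1 - d))) := by
    rw [hh, mul_pow,
      Real.sq_sqrt (le_of_lt (div_pos hd1 hd1')),
      Real.sq_sqrt (le_of_lt (div_pos hA hB))]
  -- jump quantities
  have hP : p₁ - p₀ = m₀ ^ 2 * (z₀ * s) * (fZ ^ 2 * (t * Z) - 1) / (d + 1) := by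
    rw [hp₁, hp₀, hm₁, hz₁, mul_pow, Real.mul_rpow (le_of_lt hZ0) (le_of_lt hz₀), e2', f2]
    field_simp
  have hT : τ₀ - τ₁ = z₀ / s * (1 - Z / t) / (d - 1) := by
    rw [hτ₀, hτ₁, hz₁, Real.mul_rpow (le_of_lt hZ0) (le_of_lt hz₀), e4, f4]
    field_simp
  have hB' : 0 < 1 - Z / t := by rw [← e4]; exact hB
  constructor
  · rw [hu, hP, hT, hgsq, e2', e4]
    field_simp
    ring
  · have hTne : τ₀ - τ₁ ≠ 0 := by
      rw [hT]
      positivity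
    have hξ' : ξ ^ 2 = (p₁ - p₀) / (τ₀ - τ₁) := by
      field_simp
      linarith [hξ]
    have gen : ∀ B : ℝ, B ≠ 0 →
        m₀ ^ 2 * (s * s) * ((d - 1) / (d + 1) * ((fZ ^ 2 * (t * Z) - 1) / B)) *
          (z₀ / s * B / (d - 1)) = m₀ ^ 2 * (z₀ * s) * (fZ ^ 2 * (t * Z) - 1) / (d + 1) := by
      intro B hBne
      field_simp
    have key : m₀ ^ 2 * z₀ ^ (2 * d) * hZ ^ 2 * (τ₀ - τ₁) = p₁ - p₀ := by
      rw [hP, hT, hhsq, e2', e4, f3]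
      exact gen _ (ne_of_gt hB')
    exact mul_right_cancel₀ hTne (hξ.trans key.symm)
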